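/- For all multisets a and c on X, d_E(a,c) = d_E(a_c, c_a); that is, d_E is unchanged when a and c are replaced by their multiset differences a − a∩c and c − a∩c. -/

import Mathlib

/-- `ρ` is a metric: zero iff equal, symmetric, triangle inequality. -/
def IsMetric {α : Type*} (ρ : α → α → ℝ) : Prop :=
  (∀ x y, ρ x y = 0 ↔ x = y) ∧ (∀ x y, ρ x y = ρ y x) ∧
    ∀ x y z, ρ x z ≤ ρ x y + ρ y z

def IsCauchyWith {α : Type*} (ρ : α → α → ℝ) (S : ℕ → α) : Prop :=
  ∀ ε : ℝ, 0 < ε → ∃ N : ℕ, ∀ m ≥ N, ∀ n ≥ N, ρ (S m) (S n) < ε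

def TendsToWith {α : Type*} (ρ : α → α → ℝ) (S : ℕ → α) (l : α) : Prop :=
  ∀ ε : ℝ, 0 < ε → ∃ N : ℕ, ∀ n ≥ N, ρ (S n) l < ε

def IsCompleteWith {α : Type*} (ρ : α → α → ℝ) : Prop :=
  ∀ S : ℕ → α, IsCauchyWith ρ S → ∃ l, TendsToWith ρ S l

/-- the topology generated by the open balls of `ρ` -/
def topOf {α : Type*} (ρ : α → α → ℝ) : TopologicalSpace α :=
  TopologicalSpace.generateFrom {s | ∃ (x : α) (ε : ℝ), s = {y | ρ x y < ε}}

/-- `sup d`, the supremum of all distances in `X` -/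
noncomputable def supD (X : Type*) [MetricSpace X] : ℝ :=
  sSup {r : ℝ | ∃ x y : X, dist x y = r}

/-- The multiset distance `d_E`: enumerate `a` and `c` with multiplicity in all possible
orders; the shorter enumeration is matched against an initial part of the other, taking
the sum of the distances of matched pairs plus the notional part `M * |C(c) - C(a)|`;
`d_E` is the least such value. -/
noncomputable def dE {X : Type*} [MetricSpace X] (M : ℝ) (a c : Multiset X) : ℝ :=
  sInf {r : ℝ | ∃ la lc : List X, (la : Multiset X) = a ∧ (lc : Multiset X) = c ∧
    r = (List.zipWith dist la lc).sum + M * |(c.card : ℝ) - (a.card : ℝ)|}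

/-- `d_Em`, the mean version of `d_E` (equal to `0` on the pair of empty multisets). -/
noncomputable def dEm {X : Type*} [MetricSpace X] (M : ℝ) (a c : Multiset X) : ℝ :=
  dE M a c / (max a.card c.card : ℕ)


section helper
set_option linter.unusedSectionVars false
namespace DEaux

variable {X : Type*} [MetricSpace X]

lemma zip_sum_nonneg : ∀ (la lc : List X), 0 ≤ (List.zipWith dist la lc).sum
  | [], _ => by simp
  | _ :: _, [] => by simp
  | a :: la, c :: lc => by
      simp only [List.zipWith_cons_cons, List.sum_cons]
      have h1 := zip_sum_nonneg la lc
      have h2 : (0:ℝ) ≤ dist a c := dist_nonneg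
      linarith

lemma mset_eraseIdx : ∀ (l : List X) (i : ℕ) (h : i < l.length),
    (l[i] ::ₘ (l.eraseIdx i : Multiset X)) = (l : Multiset X)
  | a :: t, 0, _ => by simp [Multiset.cons_coe]
  | a :: t, i + 1, h => by
      have h' : i < t.length := by simpa using h
      have := mset_eraseIdx t i h'
      simp only [List.eraseIdx_cons_succ, List.getElem_cons_succ, ← Multiset.cons_coe]
      rw [Multiset.cons_swap, this]

lemma mset_set : ∀ (l : List X) (i : ℕ) (q : X) (h : i < l.length),
    (l[i] ::ₘ (l.set i q : Multiset X)) = q ::ₘ (l : Multiset X)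
  | a :: t, 0, q, _ => by
      simp only [List.set_cons_zero, List.getElem_cons_zero, ← Multiset.cons_coe]
      rw [Multiset.cons_swap]
  | a :: t, i + 1, q, h => by
      have h' : i < t.length := by simpa using h
      have := mset_set t i q h'
      simp only [List.set_cons_succ, List.getElem_cons_succ, ← Multiset.cons_coe]
      rw [Multiset.cons_swap, this, Multiset.cons_swap]

lemma swap_cost : ∀ (j : ℕ) (la lc : List X) (q x : X) (h : j < lc.length), lc[j] = x →
    (List.zipWith dist la (lc.set j q)).sum ≤ dist q x + (List.zipWith dist la lc).sum
  | 0, [], c :: tc, q, x, h, hx => by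
      have : (0:ℝ) ≤ dist q x := dist_nonneg
      simpa using this
  | 0, p :: ta, c :: tc, q, x, h, hx => by
      simp only [List.getElem_cons_zero] at hx; subst hx
      simp only [List.set_cons_zero, List.zipWith_cons_cons, List.sum_cons]
      have h1 := dist_triangle p c q
      have h2 : dist q c = dist c q := dist_comm _ _
      linarith
  | j + 1, [], c :: tc, q, x, h, hx => by
      have : (0:ℝ) ≤ dist q x := dist_nonneg
      simpa using this
  | j + 1, p :: ta, c :: tc, q, x, h, hx => by
      have h' : j < tc.length := by simpa using h
      have hx' : tc[j] = x := by simpa using hx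
      have := swap_cost j ta tc q x h' hx'
      simp only [List.set_cons_succ, List.zipWith_cons_cons, List.sum_cons]
      linarith

lemma pair_move : ∀ (i : ℕ) (la lc : List X) (h1 : i < la.length) (h2 : i < lc.length),
    (List.zipWith dist (la[i] :: la.eraseIdx i) (lc[i] :: lc.eraseIdx i)).sum
      = (List.zipWith dist la lc).sum
  | 0, a :: ta, c :: tc, _, _ => by simp
  | i + 1, a :: ta, c :: tc, h1, h2 => by
      have h1' : i < ta.length := by simpa using h1
      have h2' : i < tc.length := by simpa using h2
      have ih := pair_move i ta tc h1' h2'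
      simp only [List.eraseIdx_cons_succ, List.getElem_cons_succ,
        List.zipWith_cons_cons, List.sum_cons] at *
      linarith

/-- if `x` heads the first list and occurs in the second, the second can be
rearranged to put `x` at its head without increasing the matching cost. -/
lemma head_align (x : X) (ta lc : List X) (hx : x ∈ lc) :
    ∃ lc2 : List X, ((x :: lc2 : List X) : Multiset X) = (lc : Multiset X) ∧
      (List.zipWith dist (x :: ta) (x :: lc2)).sum ≤ (List.zipWith dist (x :: ta) lc).sum := by
  obtain ⟨j, hj, hjx⟩ := List.mem_iff_getElem.mp hx
  match lc, j with
  | q :: tc, 0 =>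
      simp only [List.getElem_cons_zero] at hjx
      exact ⟨tc, by rw [hjx], by rw [hjx]⟩
  | q :: tc, j + 1 =>
      have hj' : j < tc.length := by simpa using hj
      have hjx' : tc[j] = x := by simpa using hjx
      refine ⟨tc.set j q, ?_, ?_⟩
      · have := mset_set tc j q hj'
        rw [hjx'] at this
        simp only [← Multiset.cons_coe]
        rw [this]
      · simp only [List.zipWith_cons_cons, List.sum_cons, dist_self]
        have := swap_cost j ta tc q x hj' hjx'
        have h2 : dist q x = dist x q := dist_comm _ _
        have h3 : (0:ℝ) ≤ dist x q := dist_nonneg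
        linarith

lemma zip_dist_comm (la lc : List X) :
    (List.zipWith dist la lc).sum = (List.zipWith dist lc la).sum := by
  rw [List.zipWith_comm_of_comm (f := dist) (fun a b => dist_comm a b)]

/-- symmetric version: `x` heads the second list and occurs in the first. -/
lemma head_align' (x : X) (la tc : List X) (hx : x ∈ la) :
    ∃ la2 : List X, ((x :: la2 : List X) : Multiset X) = (la : Multiset X) ∧
      (List.zipWith dist (x :: la2) (x :: tc)).sum ≤ (List.zipWith dist la (x :: tc)).sum := by
  obtain ⟨la2, hm, hs⟩ := head_align x tc la hx
  exact ⟨la2, hm, by rw [zip_dist_comm (x :: la2), zip_dist_comm la]; exact hs⟩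

/-- the key exchange lemma: a common element can be erased from both lists
without increasing the matching cost. -/
lemma erase_both [DecidableEq X] (x : X) (la lc : List X) (ha : x ∈ la) (hc : x ∈ lc) :
    ∃ la2 lc2 : List X, (la2 : Multiset X) = (la : Multiset X).erase x ∧
      (lc2 : Multiset X) = (lc : Multiset X).erase x ∧
      (List.zipWith dist la2 lc2).sum ≤ (List.zipWith dist la lc).sum := by
  classical
  obtain ⟨j, hj, hjx⟩ := List.mem_iff_getElem.mp hc
  by_cases hjla : j < la.length
  · -- x in lc is matched; bring the pair to the front
    have hpm := pair_move j la lc hjla hj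
    rw [hjx] at hpm
    have hx' : x ∈ la[j] :: la.eraseIdx j := by
      have : ((la[j] :: la.eraseIdx j : List X) : Multiset X) = (la : Multiset X) := by
        rw [← Multiset.cons_coe]; exact mset_eraseIdx la j hjla
      rw [← Multiset.mem_coe, this, Multiset.mem_coe]; exact ha
    obtain ⟨la2, hm, hs⟩ := head_align' x (la[j] :: la.eraseIdx j) (lc.eraseIdx j) hx'
    refine ⟨la2, lc.eraseIdx j, ?_, ?_, ?_⟩
    · have hmla : x ::ₘ (la2 : Multiset X) = (la : Multiset X) := by
        rw [Multiset.cons_coe]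
        rw [hm, ← Multiset.cons_coe]; exact mset_eraseIdx la j hjla
      rw [← hmla, Multiset.erase_cons_head]
    · have : x ::ₘ (lc.eraseIdx j : Multiset X) = (lc : Multiset X) := by
        rw [← hjx]; exact mset_eraseIdx lc j hj
      rw [← this, Multiset.erase_cons_head]
    · have hstrip : (List.zipWith dist (x :: la2) (x :: lc.eraseIdx j)).sum
          = dist x x + (List.zipWith dist la2 (lc.eraseIdx j)).sum := by simp
      rw [hstrip, dist_self] at hs
      linarith [hs.trans (le_of_eq hpm)]
  · -- x in lc is unmatched; x in la is matched since la is strictly shorter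
    obtain ⟨i, hi, hix⟩ := List.mem_iff_getElem.mp ha
    have hilc : i < lc.length := lt_of_lt_of_le hi (le_trans (not_lt.mp hjla) (le_of_lt hj))
    have hpm := pair_move i la lc hi hilc
    rw [hix] at hpm
    have hij : i ≠ j := fun h => hjla (h ▸ hi)
    have hxerase : x ∈ lc.eraseIdx i :=
      List.mem_eraseIdx_iff_getElem.mpr ⟨j, hj, hij.symm, hjx⟩
    have hx' : x ∈ lc[i] :: lc.eraseIdx i := List.mem_cons_of_mem _ hxerase
    obtain ⟨lc2, hm, hs⟩ := head_align x (la.eraseIdx i) (lc[i] :: lc.eraseIdx i) hx'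
    refine ⟨la.eraseIdx i, lc2, ?_, ?_, ?_⟩
    · have : x ::ₘ (la.eraseIdx i : Multiset X) = (la : Multiset X) := by
        rw [← hix]; exact mset_eraseIdx la i hi
      rw [← this, Multiset.erase_cons_head]
    · have hmlc : x ::ₘ (lc2 : Multiset X) = (lc : Multiset X) := by
        rw [Multiset.cons_coe, hm, ← Multiset.cons_coe]
        exact mset_eraseIdx lc i hilc
      rw [← hmlc, Multiset.erase_cons_head]
    · have hstrip : (List.zipWith dist (x :: la.eraseIdx i) (x :: lc2)).sum
          = dist x x + (List.zipWith dist (la.eraseIdx i) lc2).sum := by simp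
      rw [hstrip, dist_self] at hs
      linarith [hs.trans (le_of_eq hpm)]


lemma dE_set_nonempty (M : ℝ) (a c : Multiset X) :
    {r : ℝ | ∃ la lc : List X, (la : Multiset X) = a ∧ (lc : Multiset X) = c ∧
      r = (List.zipWith dist la lc).sum + M * |(c.card : ℝ) - (a.card : ℝ)|}.Nonempty :=
  ⟨_, a.toList, c.toList, Multiset.coe_toList a, Multiset.coe_toList c, rfl⟩

lemma dE_set_bdd (M : ℝ) (hM : 0 < M) (a c : Multiset X) :
    BddBelow {r : ℝ | ∃ la lc : List X, (la : Multiset X) = a ∧ (lc : Multiset X) = c ∧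
      r = (List.zipWith dist la lc).sum + M * |(c.card : ℝ) - (a.card : ℝ)|} := by
  refine ⟨0, ?_⟩
  rintro r ⟨la, lc, -, -, rfl⟩
  have h1 := zip_sum_nonneg la lc
  have h2 : 0 ≤ M * |(c.card : ℝ) - (a.card : ℝ)| := mul_nonneg hM.le (abs_nonneg _)
  linarith

lemma dE_erase [DecidableEq X] (M : ℝ) (hM : 0 < M) (a c : Multiset X) (x : X)
    (hxa : x ∈ a) (hxc : x ∈ c) :
    dE M a c = dE M (a.erase x) (c.erase x) := by
  have hacard : (a.card : ℝ) = ((a.erase x).card : ℝ) + 1 := by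
    rw [← Multiset.cons_erase hxa, Multiset.card_cons]
    push_cast
    simp [Multiset.erase_cons_head]
  have hccard : (c.card : ℝ) = ((c.erase x).card : ℝ) + 1 := by
    rw [← Multiset.cons_erase hxc, Multiset.card_cons]
    push_cast
    simp [Multiset.erase_cons_head]
  have habs : |(c.card : ℝ) - (a.card : ℝ)|
      = |((c.erase x).card : ℝ) - ((a.erase x).card : ℝ)| := by
    rw [hacard, hccard]; congr 1; ring
  unfold dE
  apply le_antisymm
  · refine le_csInf (dE_set_nonempty M _ _) ?_
    rintro r ⟨la, lc, h1, h2, rfl⟩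
    refine csInf_le (dE_set_bdd M hM a c) ⟨x :: la, x :: lc, ?_, ?_, ?_⟩
    · rw [← Multiset.cons_coe, h1, Multiset.cons_erase hxa]
    · rw [← Multiset.cons_coe, h2, Multiset.cons_erase hxc]
    · simp only [List.zipWith_cons_cons, List.sum_cons, dist_self, zero_add, habs]
  · refine le_csInf (dE_set_nonempty M _ _) ?_
    rintro r ⟨la, lc, h1, h2, rfl⟩
    have hxla : x ∈ la := by rw [← h1] at hxa; exact Multiset.mem_coe.mp hxa
    have hxlc : x ∈ lc := by rw [← h2] at hxc; exact Multiset.mem_coe.mp hxc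
    obtain ⟨la2, lc2, hm1, hm2, hs⟩ := erase_both x la lc hxla hxlc
    have hmem : (List.zipWith dist la2 lc2).sum
        + M * |((c.erase x).card : ℝ) - ((a.erase x).card : ℝ)| ∈
        {r : ℝ | ∃ la' lc' : List X, (la' : Multiset X) = a.erase x ∧
          (lc' : Multiset X) = c.erase x ∧
          r = (List.zipWith dist la' lc').sum
            + M * |((c.erase x).card : ℝ) - ((a.erase x).card : ℝ)|} :=
      ⟨la2, lc2, by rw [hm1, h1], by rw [hm2, h2], rfl⟩
    refine le_trans (csInf_le (dE_set_bdd M hM _ _) hmem) ?_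
    rw [habs]
    linarith
  
lemma dE_sub [DecidableEq X] (M : ℝ) (hM : 0 < M) (s : Multiset X) :
    ∀ a c : Multiset X, s ≤ a → s ≤ c → dE M a c = dE M (a - s) (c - s) := by
  induction s using Multiset.induction_on with
  | empty => intro a c _ _; simp
  | cons x t ih =>
    intro a c hsa hsc
    have hxa : x ∈ a := Multiset.mem_of_le hsa (Multiset.mem_cons_self x t)
    have hxc : x ∈ c := Multiset.mem_of_le hsc (Multiset.mem_cons_self x t)
    have hta : t ≤ a.erase x := (Multiset.cons_le_cons_iff x).mp (by rwa [Multiset.cons_erase hxa])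
    have htc : t ≤ c.erase x := (Multiset.cons_le_cons_iff x).mp (by rwa [Multiset.cons_erase hxc])
    have key : ∀ m : Multiset X, m.erase x - t = m - (x ::ₘ t) := fun m => by
      rw [← Multiset.sub_singleton, tsub_tsub, Multiset.singleton_add]
    rw [dE_erase M hM a c x hxa hxc, ih _ _ hta htc, key, key]


end DEaux
end helper

/-- `d_E` is unchanged when `a` and `c` are replaced by the multiset
differences `a - a ∩ c` and `c - a ∩ c`. -/
theorem stmt_3 {X : Type*} [MetricSpace X] [Nontrivial X] [DecidableEq X] (M : ℝ) (hM : 0 < M)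
    (a c : Multiset X) :
    dE M a c = dE M (a - a.inter c) (c - a.inter c) :=
  DEaux.dE_sub M hM (a.inter c) a c Multiset.inter_le_left Multiset.inter_le_right
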